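/- arXiv:1501.06163 — 4 statements merged into one kernel-verified Lean document; each statement's English description precedes it below -/
import Mathlib

section
/- Let E be a real vector space of finite dimension n, let p be an integer with 1 ≤ p ≤ n, let u : Fin p → E be a linearly independent family, and let V be the span of the u i. Let φ be an alternating p-linear form on E with φ(u 0, …, u (p−1)) = 1. Then there exists a unique linear subspace W of E such that (i) V and W are complementary (V ⊓ W = ⊥ and V ⊔ W = ⊤), and (ii) for every w ∈ W and every (p−1)-tuple x 0, …, x (p−2) of vectors all lying in V, one has φ(x 0, …, x (p−2), w) = 0. -/
open Fin Submodule

/-- An injective self-map of a finite type, as a permutation. -/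
private noncomputable def permOfInj {m : ℕ} (f : Fin m → Fin m)
    (hf : Function.Injective f) : Equiv.Perm (Fin m) :=
  Equiv.ofBijective f (Finite.injective_iff_bijective.mp hf)

@[simp] private lemma permOfInj_apply {m : ℕ} (f : Fin m → Fin m)
    (hf : Function.Injective f) (k : Fin m) : permOfInj f hf k = f k := rfl

/-- Permuting the first `q` arguments of an alternating map preserves vanishing. -/
private lemma snoc_perm_zero {E : Type*} [AddCommGroup E] [Module ℝ E] {q : ℕ}
    (ψ : AlternatingMap ℝ E ℝ (Fin (q + 1))) (a : Fin q → E) (w : E)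
    (τ : Equiv.Perm (Fin q)) (h : ψ (Fin.snoc a w) = 0) :
    ψ (Fin.snoc (a ∘ τ) w) = 0 := by
  set π : Equiv.Perm (Fin (q + 1)) :=
    finSuccEquivLast.symm.permCongr (Equiv.optionCongr τ) with hπ
  have key : Fin.snoc (a ∘ τ) w = (Fin.snoc a w : Fin (q+1) → E) ∘ π := by
    funext i
    refine Fin.lastCases ?_ (fun k => ?_) i
    · simp [hπ, Equiv.permCongr_apply]
    · simp [hπ, Equiv.permCongr_apply]
  rw [key, ψ.map_perm, h, smul_zero]

/-- Harvey–Lawson lemma (Lemma 3.2), coordinate-free form: given a linearly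
independent family `u : Fin p → E` spanning `V` and an alternating `p`-form `φ`
with `φ u = 1`, there is a unique subspace `W` complementary to `V` such that
`φ (x 0, …, x (p-2), w) = 0` whenever all the `x i` lie in `V` and `w ∈ W`. -/
theorem stmt_0 (E : Type*) [AddCommGroup E] [Module ℝ E] [FiniteDimensional ℝ E]
    (n p : ℕ) (hn : Module.finrank ℝ E = n) (hp1 : 1 ≤ p) (hpn : p ≤ n)
    (u : Fin p → E) (hu : LinearIndependent ℝ u)
    (V : Submodule ℝ E) (hV : V = Submodule.span ℝ (Set.range u))
    (φ : AlternatingMap ℝ E ℝ (Fin p)) (hφ : φ u = 1) :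
    ∃! W : Submodule ℝ E, IsCompl V W ∧
      ∀ w ∈ W, ∀ x : Fin p → E, (∀ i : Fin p, (i : ℕ) < p - 1 → x i ∈ V) →
        φ (fun i => if (i : ℕ) < p - 1 then x i else w) = 0 := by
  subst hV
  obtain ⟨q, rfl⟩ : ∃ q, p = q + 1 := ⟨p - 1, (Nat.succ_pred_eq_of_pos hp1).symm⟩
  have hq : q + 1 - 1 = q := rfl
  -- the linear functionals c j
  set c : Fin (q + 1) → (E →ₗ[ℝ] ℝ) :=
    fun j => φ.toMultilinearMap.curryRight (fun k => u (j.succAbove k)) with hc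
  have hc_apply : ∀ j w, c j w = φ (Fin.snoc (u ∘ j.succAbove) w) := fun j w => rfl
  set W : Submodule ℝ E := ⨅ j, LinearMap.ker (c j) with hW
  have hmemW : ∀ w, w ∈ W ↔ ∀ j, c j w = 0 := by
    intro w; simp [hW, Submodule.mem_iInf, LinearMap.mem_ker]
  -- off-diagonal vanishing
  have Koff : ∀ j k : Fin (q + 1), k ≠ j → c j (u k) = 0 := by
    intro j k hkj
    obtain ⟨m, hm⟩ := Fin.exists_succAbove_eq hkj
    rw [hc_apply]
    refine φ.map_eq_zero_of_eq _ (i := Fin.castSucc m) (j := Fin.last q) ?_ ?_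
    · simp [hm]
    · exact (Fin.castSucc_lt_last m).ne
  -- diagonal nonvanishing
  have Kdiag : ∀ j : Fin (q + 1), c j (u j) ≠ 0 := by
    intro j
    have hinj : Function.Injective (Fin.snoc (j.succAbove) j : Fin (q+1) → Fin (q+1)) := by
      intro a b hab
      induction a using Fin.lastCases with
      | last =>
        induction b using Fin.lastCases with
        | last => rfl
        | cast b =>
          simp only [Fin.snoc_last, Fin.snoc_castSucc] at hab
          exact absurd hab.symm (Fin.succAbove_ne j b)
      | cast a =>
        induction b using Fin.lastCases with
        | last =>
          simp only [Fin.snoc_last, Fin.snoc_castSucc] at hab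
          exact absurd hab (Fin.succAbove_ne j a)
        | cast b =>
          simp only [Fin.snoc_castSucc] at hab
          exact congrArg Fin.castSucc (Fin.succAbove_right_injective hab)
    set σ := permOfInj _ hinj with hσ
    have h1 : (Fin.snoc (u ∘ j.succAbove) (u j) : Fin (q+1) → E) = u ∘ σ := by
      funext i
      refine Fin.lastCases ?_ (fun k => ?_) i
      · simp [hσ]
      · simp [hσ]
    rw [hc_apply, h1]
    have := φ.map_perm u σ
    have hcoe : (u ∘ ⇑σ) = u ∘ (Fin.snoc (j.succAbove) j : Fin (q+1) → Fin (q+1)) := rfl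
    rw [this, hφ]
    rcases Int.units_eq_one_or (Equiv.Perm.sign σ) with h | h <;> simp [h]
  -- the key vanishing lemma
  have Kmain : ∀ w : E, (∀ j, c j w = 0) →
      ∀ v : Fin q → Fin (q + 1), φ (Fin.snoc (u ∘ v) w) = 0 := by
    intro w hw v
    by_cases hv : Function.Injective v
    · -- v injective: misses some j
      have : ∃ j : Fin (q+1), ∀ k, v k ≠ j := by
        by_contra h
        push_neg at h
        have hsurj : Function.Surjective v := fun j => h j
        have := Fintype.card_le_of_surjective v hsurj
        simp at this
      obtain ⟨j, hj⟩ := this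
      have hτ0 : ∀ k, ∃ m, j.succAbove m = v k := fun k => Fin.exists_succAbove_eq (hj k)
      choose τ0 hτ0 using hτ0
      have hτinj : Function.Injective τ0 := by
        intro a b hab
        apply hv
        rw [← hτ0 a, ← hτ0 b, hab]
      have hcomp : u ∘ v = (u ∘ j.succAbove) ∘ (permOfInj τ0 hτinj) := by
        funext k; simp [hτ0]
      rw [hcomp]
      exact snoc_perm_zero φ (u ∘ j.succAbove) w _ ((hc_apply j w) ▸ hw j)
    · -- v not injective: two equal entries
      rw [Function.not_injective_iff] at hv
      obtain ⟨a, b, hab, hne⟩ := hv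
      refine φ.map_eq_zero_of_eq _ (i := Fin.castSucc a) (j := Fin.castSucc b) ?_ ?_
      · simp [hab]
      · simpa using hne
  -- property (ii) for W, in the form of the statement
  have Kprop : ∀ w : E, (∀ j, c j w = 0) → ∀ x : Fin (q+1) → E,
      (∀ i : Fin (q+1), (i : ℕ) < q → x i ∈ Submodule.span ℝ (Set.range u)) →
      φ (fun i => if (i : ℕ) < q then x i else w) = 0 := by
    intro w hw x hx
    have hy : ∀ k : Fin q, x (Fin.castSucc k) ∈ Submodule.span ℝ (Set.range u) :=
      fun k => hx _ k.isLt
    have hform : (fun i : Fin (q+1) => if (i : ℕ) < q then x i else w)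
        = Fin.snoc (fun k : Fin q => x (Fin.castSucc k)) w := by
      funext i
      refine Fin.lastCases ?_ (fun k => ?_) i
      · simp
      · simp [k.isLt]
    rw [hform]
    -- multilinear map on V^q
    set b : Module.Basis (Fin (q+1)) ℝ (Submodule.span ℝ (Set.range u)) := Module.Basis.span hu with hb
    set G : MultilinearMap ℝ (fun _ : Fin q => (Submodule.span ℝ (Set.range u))) ℝ :=
      ((LinearMap.applyₗ w).compMultilinearMap φ.toMultilinearMap.curryRight).compLinearMap
        (fun _ => (Submodule.span ℝ (Set.range u)).subtype) with hG
    have hGapp : ∀ y : Fin q → (Submodule.span ℝ (Set.range u)),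
        G y = φ (Fin.snoc (fun k => (y k : E)) w) := fun y => rfl
    have hG0 : G = 0 := by
      refine Module.Basis.ext_multilinear (fun _ => b) ?_
      intro v
      rw [hGapp]
      have : (fun k : Fin q => ((b (v k) : E))) = u ∘ v := by
        funext k; simp [hb, Module.Basis.span_apply]
      rw [this, Kmain w hw v]
      rfl
    have := congrFun (congrArg DFunLike.coe hG0) (fun k => ⟨x (Fin.castSucc k), hy k⟩)
    rw [hGapp] at this
    simpa using this
  -- converse: property implies membership in W
  have Kconv : ∀ w : E,
      (∀ x : Fin (q+1) → E, (∀ i : Fin (q+1), (i : ℕ) < q → x i ∈ Submodule.span ℝ (Set.range u)) →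
        φ (fun i => if (i : ℕ) < q then x i else w) = 0) → ∀ j, c j w = 0 := by
    intro w h j
    have hx : ∀ i : Fin (q+1), (i : ℕ) < q →
        (if hi : (i : ℕ) < q then u (j.succAbove ⟨(i : ℕ), hi⟩) else (0 : E))
          ∈ Submodule.span ℝ (Set.range u) := by
      intro i hi
      rw [dif_pos hi]
      exact Submodule.subset_span ⟨_, rfl⟩
    have := h (fun i => if hi : (i : ℕ) < q then u (j.succAbove ⟨(i : ℕ), hi⟩) else 0) hx
    rw [hc_apply]
    convert this using 2
    funext i
    refine Fin.lastCases ?_ (fun k => ?_) i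
    · simp
    · simp [k.isLt]
  -- V ⊓ W = ⊥
  have hinf : Submodule.span ℝ (Set.range u) ⊓ W = ⊥ := by
    rw [eq_bot_iff]
    intro v hv
    obtain ⟨hv1, hv2⟩ := Submodule.mem_inf.mp hv
    rw [hmemW] at hv2
    obtain ⟨a, ha⟩ := (mem_span_range_iff_exists_fun ℝ).mp hv1
    have hzero : ∀ j, a j = 0 := by
      intro j
      have h0 : c j v = 0 := hv2 j
      rw [← ha, map_sum] at h0
      simp only [map_smul, smul_eq_mul] at h0
      rw [Finset.sum_eq_single j (fun k _ hk => by rw [Koff j k hk, mul_zero])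
        (fun h => absurd (Finset.mem_univ j) h)] at h0
      exact (mul_eq_zero.mp h0).resolve_right (Kdiag j)
    have : v = 0 := by rw [← ha]; simp [hzero]
    simp [this]
  -- V ⊔ W = ⊤
  have hsup : Submodule.span ℝ (Set.range u) ⊔ W = ⊤ := by
    rw [eq_top_iff]
    intro w _
    have hdecomp : w = (∑ j, (c j w / c j (u j)) • u j)
        + (w - ∑ j, (c j w / c j (u j)) • u j) := by abel
    have h1 : (∑ j, (c j w / c j (u j)) • u j) ∈ Submodule.span ℝ (Set.range u) :=
      Submodule.sum_mem _ fun j _ =>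
        Submodule.smul_mem _ _ (Submodule.subset_span ⟨j, rfl⟩)
    have h2 : (w - ∑ j, (c j w / c j (u j)) • u j) ∈ W := by
      rw [hmemW]
      intro k
      rw [map_sub, map_sum]
      simp only [map_smul, smul_eq_mul]
      rw [Finset.sum_eq_single k (fun j _ hj => by rw [Koff k j hj, mul_zero])
        (fun h => absurd (Finset.mem_univ k) h)]
      rw [div_mul_cancel₀ _ (Kdiag k), sub_self]
    rw [hdecomp]
    exact Submodule.add_mem_sup h1 h2
  refine ⟨W, ⟨IsCompl.of_eq hinf hsup, ?_⟩, ?_⟩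
  · intro w hw x hx
    exact Kprop w ((hmemW w).mp hw) x hx
  · rintro W' ⟨hcompl', hprop'⟩
    have hle : W' ≤ W := by
      intro w hw
      rw [hmemW]
      exact Kconv w (fun x hx => hprop' w hw x hx)
    have hsup' : Submodule.span ℝ (Set.range u) ⊔ W' = ⊤ := hcompl'.sup_eq_top
    have hmod := sup_inf_assoc_of_le (x := W') (z := W)
      (Submodule.span ℝ (Set.range u)) hle
    rw [sup_comm W', hsup', top_inf_eq, hinf, sup_bot_eq] at hmod
    exact hmod.symm
end

section
/- Let E be a real vector space of finite dimension n, let p be an integer with 1 ≤ p ≤ n, let u : Fin p → E be a linearly independent family, and let V be the span of the u i. Let φ be an alternating p-linear form on E with φ(u 0, …, u (p−1)) = 1. Define W := {w ∈ E : φ(x 0, …, x (p−2), w) = 0 for all x 0, …, x (p−2) ∈ V}. Then W is a linear subspace of E that is complementary to V, i.e. V ∩ W = {0} and V + W = E; in particular dim W = n − p. -/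
/-- Explicit description of the complement in the Harvey–Lawson lemma
(Lemma 3.2): the set `W = {w | φ(x 0, …, x (p-2), w) = 0 for all x i ∈ V}` is a
linear subspace complementary to `V = span u`, of dimension `n - p`. -/
theorem stmt_1 (E : Type*) [AddCommGroup E] [Module ℝ E] [FiniteDimensional ℝ E]
    (n p : ℕ) (hn : Module.finrank ℝ E = n) (hp1 : 1 ≤ p) (hpn : p ≤ n)
    (u : Fin p → E) (hu : LinearIndependent ℝ u)
    (V : Submodule ℝ E) (hV : V = Submodule.span ℝ (Set.range u))
    (φ : AlternatingMap ℝ E ℝ (Fin p)) (hφ : φ u = 1)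
    (W : Set E)
    (hW : W = {w : E | ∀ x : Fin p → E, (∀ i : Fin p, (i : ℕ) < p - 1 → x i ∈ V) →
        φ (fun i => if (i : ℕ) < p - 1 then x i else w) = 0}) :
    ∃ W' : Submodule ℝ E, (W' : Set E) = W ∧ IsCompl V W' ∧
      Module.finrank ℝ W' = n - p := by
  subst hV hW hn
  obtain ⟨m, rfl⟩ : ∃ m, p = m + 1 := ⟨p - 1, (Nat.succ_pred_eq_of_pos hp1).symm⟩
  set V := Submodule.span ℝ (Set.range u) with hV
  -- the basic linear functionals `w ↦ φ (u with slot j replaced by w)`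
  set L : Fin (m + 1) → (E →ₗ[ℝ] ℝ) :=
    fun j => φ.toMultilinearMap.toLinearMap u j with hLdef
  have hLapp : ∀ j w, L j w = φ (Function.update u j w) := fun j w => rfl
  have hLu : ∀ j k, L j (u k) = if j = k then (1 : ℝ) else 0 := by
    intro j k
    rcases eq_or_ne j k with rfl | hjk
    · simp only [if_pos rfl, hLapp, Function.update_eq_self]
      exact hφ
    · rw [if_neg hjk, hLapp]
      exact φ.map_eq_zero_of_eq _
        (by rw [Function.update_self, Function.update_of_ne (Ne.symm hjk)]) hjk
  -- the key permutation identity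
  have key : ∀ (σ : Equiv.Perm (Fin (m + 1))) (w : E),
      φ (Fin.snoc (fun k : Fin m => u (σ k.castSucc)) w) =
        Equiv.Perm.sign σ • L (σ (Fin.last m)) w := by
    intro σ w
    have h1 : Fin.snoc (fun k : Fin m => u (σ k.castSucc)) w
        = (Function.update u (σ (Fin.last m)) w) ∘ σ := by
      funext i
      induction i using Fin.lastCases with
      | last => simp
      | cast k =>
        simp only [Fin.snoc_castSucc, Function.comp_apply]
        rw [Function.update_of_ne (σ.injective.ne (Fin.castSucc_lt_last k).ne)]
    rw [h1, AlternatingMap.map_perm, hLapp]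
  -- vanishing on all tuples of the form (u ∘ v, w)
  have key2 : ∀ (w : E), (∀ j, L j w = 0) → ∀ v : Fin m → Fin (m + 1),
      φ (Fin.snoc (fun k => u (v k)) w) = 0 := by
    intro w hw v
    by_cases hinj : Function.Injective v
    · obtain ⟨j, hj⟩ : ∃ j, ∀ k, v k ≠ j := by
        by_contra h
        push_neg at h
        have hsurj : Function.Surjective v := fun j => h j
        have := Fintype.card_le_of_surjective v hsurj
        simp at this
      have hbij : Function.Bijective (Fin.snoc v j : Fin (m + 1) → Fin (m + 1)) := by
        rw [Fintype.bijective_iff_injective_and_card]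
        refine ⟨?_, rfl⟩
        intro a b hab
        induction a using Fin.lastCases with
        | last =>
          induction b using Fin.lastCases with
          | last => rfl
          | cast b' =>
            rw [Fin.snoc_last, Fin.snoc_castSucc] at hab
            exact absurd hab.symm (hj b')
        | cast a' =>
          induction b using Fin.lastCases with
          | last =>
            rw [Fin.snoc_last, Fin.snoc_castSucc] at hab
            exact absurd hab (hj a')
          | cast b' =>
            rw [Fin.snoc_castSucc, Fin.snoc_castSucc] at hab
            rw [hinj hab]
      set σ : Equiv.Perm (Fin (m + 1)) := Equiv.ofBijective _ hbij with hσdef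
      have hσc : ∀ k : Fin m, σ k.castSucc = v k := fun k => by simp [hσdef]
      have hσl : σ (Fin.last m) = j := by simp [hσdef]
      have h := key σ w
      simp only [hσc, hσl, hw j, smul_zero] at h
      exact h
    · rw [Function.not_injective_iff] at hinj
      obtain ⟨a, b, hab, hne⟩ := hinj
      exact φ.map_eq_zero_of_eq _ (i := a.castSucc) (j := b.castSucc)
        (by simp [hab]) (by simpa using hne)
  -- vanishing with arbitrary V-entries
  have hb : ∀ w : E, (∀ j, L j w = 0) → ∀ y : Fin m → E, (∀ k, y k ∈ V) →
      φ (Fin.snoc y w) = 0 := by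
    intro w hw y hy
    let b : Module.Basis (Fin (m + 1)) ℝ V := Module.Basis.span hu
    let Hw : MultilinearMap ℝ (fun _ : Fin m => V) ℝ :=
      ((LinearMap.applyₗ w).compMultilinearMap φ.toMultilinearMap.curryRight).compLinearMap
        (fun _ => V.subtype)
    have hHw : ∀ z : Fin m → V, Hw z = φ (Fin.snoc (fun k => (z k : E)) w) := fun z => rfl
    have hzero : Hw = 0 := by
      apply Module.Basis.ext_multilinear (fun _ => b)
      intro v
      rw [hHw]
      have hcoe : (fun k => ((b (v k) : V) : E)) = fun k => u (v k) := by
        funext k; exact congrArg Subtype.val (Module.Basis.span_apply hu (v k))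
      rw [hcoe]
      simpa using key2 w hw v
    have h0 : Hw (fun k => ⟨y k, hy k⟩) = 0 := by rw [hzero]; rfl
    rw [hHw] at h0
    exact h0
  have hcompl : IsCompl V (⨅ j, LinearMap.ker (L j)) := by
    constructor
    · rw [Submodule.disjoint_def]
      intro x hxV hxW
      rw [hV, Submodule.mem_span_range_iff_exists_fun] at hxV
      obtain ⟨c, rfl⟩ := hxV
      have hc : ∀ j, c j = 0 := by
        intro j
        have h : L j (∑ i, c i • u i) = 0 := (Submodule.mem_iInf _).mp hxW j
        rw [map_sum] at h
        simpa [hLu, Finset.sum_ite_eq] using h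
      simp [hc]
    · rw [codisjoint_iff, eq_top_iff]
      rintro e -
      have hmem : e - ∑ j, L j e • u j ∈ ⨅ j, LinearMap.ker (L j) := by
        rw [Submodule.mem_iInf]
        intro j
        rw [LinearMap.mem_ker, map_sub, map_sum]
        simp [hLu, Finset.sum_ite_eq]
      have hsum : (∑ j, L j e • u j) ∈ V :=
        Submodule.sum_mem _ fun j _ =>
          Submodule.smul_mem _ _ (Submodule.subset_span ⟨_, rfl⟩)
      have he : e = (∑ j, L j e • u j) + (e - ∑ j, L j e • u j) := by abel
      exact he ▸ Submodule.add_mem_sup hsum hmem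
  refine ⟨⨅ j, LinearMap.ker (L j), ?_, hcompl, ?_⟩
  · ext w
    simp only [SetLike.mem_coe, Submodule.mem_iInf, LinearMap.mem_ker, Set.mem_setOf_eq]
    constructor
    · intro hw x hx
      have hfun : (fun i : Fin (m + 1) => if (i : ℕ) < (m + 1) - 1 then x i else w)
          = Fin.snoc (fun k : Fin m => x k.castSucc) w := by
        funext i
        by_cases hi : (i : ℕ) < m
        · simp [Fin.snoc, hi, Nat.add_sub_cancel]
        · simp [Fin.snoc, hi, Nat.add_sub_cancel]
      rw [hfun]
      exact hb w hw _ (fun k => hx _ (by simp [k.isLt]))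
    · intro hw j
      set σ : Equiv.Perm (Fin (m + 1)) := Equiv.swap (Fin.last m) j with hσdef
      have hσl : σ (Fin.last m) = j := Equiv.swap_apply_left _ _
      have h := key σ w
      rw [hσl] at h
      have h0 : φ (Fin.snoc (fun k : Fin m => u (σ k.castSucc)) w) = 0 := by
        have h1 := hw (fun i : Fin (m + 1) =>
            if h : (i : ℕ) < m then u (σ (Fin.castSucc ⟨(i : ℕ), h⟩)) else 0) ?_
        · have hfun : (fun i : Fin (m + 1) => if (i : ℕ) < (m + 1) - 1 then
              (if h : (i : ℕ) < m then u (σ (Fin.castSucc ⟨(i : ℕ), h⟩)) else 0) else w)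
              = Fin.snoc (fun k : Fin m => u (σ k.castSucc)) w := by
            funext i
            by_cases hi : (i : ℕ) < m
            · simp [Fin.snoc, hi, Nat.add_sub_cancel]
            · simp [Fin.snoc, hi, Nat.add_sub_cancel]
          rw [hfun] at h1
          exact h1
        · intro i hi
          simp only [Nat.add_sub_cancel] at hi
          simp only [dif_pos hi]
          exact Submodule.subset_span ⟨_, rfl⟩
      rw [h0] at h
      have h2 := h.symm
      rcases Int.units_eq_one_or (Equiv.Perm.sign σ) with hs | hs <;>
        rw [hs] at h2 <;> simpa [Units.smul_def] using h2
  · have h1 := Submodule.finrank_add_eq_of_isCompl hcompl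
    have h2 : Module.finrank ℝ V = m + 1 := by
      rw [hV, finrank_span_eq_card hu, Fintype.card_fin]
    omega
end

section
/- Let E be a real vector space of finite dimension n, let p be an integer with 1 ≤ p ≤ n, let u : Fin p → E be linearly independent spanning V, and let φ be an alternating p-linear form on E with φ(u 0, …, u (p−1)) = 1. Let W be a subspace complementary to V such that φ(x 0, …, x (p−2), w) = 0 whenever all x i ∈ V and w ∈ W. Let b : Fin n → E be any basis of E such that b i = u i for all i < p and b i ∈ W for all i ≥ p. Then for every strictly increasing map ι : Fin p → Fin n which is not the canonical inclusion of Fin p into Fin n and which satisfies ι i < p for all i < p−1 (i.e. at most one of the selected indices is ≥ p), one has φ(b(ι 0), …, b(ι(p−1))) = 0; moreover φ(b 0, …, b(p−1)) = 1. Equivalently, in the expansion of φ in the dual basis p-covectors associated to b, the coefficient of b₀*∧…∧b_{p−1}* is 1 and the coefficient a_I vanishes for every other increasing multi-index I = (i₁ < … < i_p) with i_{p−1} ≤ p (1-based indexing). -/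
/-- Harvey–Lawson lemma (Lemma 3.2), basis form: for a basis `b` of `E` whose
first `p` vectors are the `u i` and whose remaining vectors lie in the
complement `W`, the expansion of `φ` in the dual-basis `p`-covectors has
coefficient `1` on `b₀* ∧ ⋯ ∧ b_{p-1}*` and coefficient `0` on every other
increasing multi-index all but possibly the last of whose entries is `< p`. -/
theorem stmt_2 (E : Type*) [AddCommGroup E] [Module ℝ E] [FiniteDimensional ℝ E]
    (n p : ℕ) (hn : Module.finrank ℝ E = n) (hp1 : 1 ≤ p) (hpn : p ≤ n)
    (u : Fin p → E) (hu : LinearIndependent ℝ u)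
    (V : Submodule ℝ E) (hV : V = Submodule.span ℝ (Set.range u))
    (φ : AlternatingMap ℝ E ℝ (Fin p)) (hφ : φ u = 1)
    (W : Submodule ℝ E) (hVW : IsCompl V W)
    (hW : ∀ w ∈ W, ∀ x : Fin p → E, (∀ i : Fin p, (i : ℕ) < p - 1 → x i ∈ V) →
        φ (fun i => if (i : ℕ) < p - 1 then x i else w) = 0)
    (b : Module.Basis (Fin n) ℝ E)
    (hb₁ : ∀ i : Fin p, b (Fin.castLE hpn i) = u i)
    (hb₂ : ∀ i : Fin n, p ≤ (i : ℕ) → b i ∈ W) :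
    (∀ ι : Fin p → Fin n, StrictMono ι → ι ≠ Fin.castLE hpn →
        (∀ i : Fin p, (i : ℕ) < p - 1 → (ι i : ℕ) < p) →
        φ (fun i => b (ι i)) = 0) ∧
      φ (fun i => b (Fin.castLE hpn i)) = 1 := by
  constructor
  · intro ι hmono hne hlt
    have hlastidx : p - 1 < p := Nat.sub_lt hp1 one_pos
    set L : Fin p := ⟨p - 1, hlastidx⟩ with hL
    by_cases hlast : (ι L : ℕ) < p
    · -- then all values < p, so ι = castLE, contradiction
      exfalso
      have hall : ∀ i : Fin p, (ι i : ℕ) < p := by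
        intro i
        rcases lt_or_ge (i : ℕ) (p - 1) with h | h
        · exact hlt i h
        · have : i = L := Fin.ext (le_antisymm (Nat.le_sub_one_of_lt i.isLt) h)
          rw [this]; exact hlast
      set ι' : Fin p → Fin p := fun i => ⟨ι i, hall i⟩ with hι'
      have hmono' : StrictMono ι' := fun a c h => hmono h
      have hsurj : Function.Surjective ι' :=
        Finite.surjective_of_injective hmono'.injective
      have hrange : Set.range ι' = Set.range (id : Fin p → Fin p) := by
        rw [Set.range_id, Set.range_eq_univ.2 hsurj]
      have : ι' = id := (hmono'.range_inj strictMono_id).1 hrange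
      apply hne
      funext i
      have : ι' i = i := by rw [this]; rfl
      exact Fin.ext (by simpa using congrArg Fin.val this)
    · -- last value ≥ p: use hW
      push_neg at hlast
      have hmem : ∀ i : Fin p, (i : ℕ) < p - 1 → b (ι i) ∈ V := by
        intro i hi
        have hip : (ι i : ℕ) < p := hlt i hi
        have : b (ι i) = u ⟨ι i, hip⟩ := by
          rw [← hb₁ ⟨ι i, hip⟩]; rfl
        rw [this, hV]
        exact Submodule.subset_span ⟨_, rfl⟩
      have := hW (b (ι L)) (hb₂ _ hlast) (fun i => b (ι i)) hmem
      rw [← this]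
      congr 1
      funext i
      by_cases hi : (i : ℕ) < p - 1
      · simp [hi]
      · have : i = L := Fin.ext (le_antisymm (Nat.le_sub_one_of_lt i.isLt)
          (le_of_not_gt hi))
        simp [hi, this]
  · have : (fun i => b (Fin.castLE hpn i)) = u := funext hb₁
    rw [this, hφ]
end

section
/- Let E be a real inner product space of finite dimension n, let p be an integer with 1 ≤ p ≤ n, and let u : Fin p → E be an orthonormal family spanning a subspace V. Let ϑ > 0 and let φ be an alternating p-linear form on E with φ(u 0, …, u (p−1)) = ϑ, and let W be a subspace of E with: (i) V and W complementary, (ii) V ⊥ W, and (iii) φ(x 0, …, x (p−2), w) = 0 whenever all x i ∈ V and w ∈ W. Let M ≥ 0 satisfy |φ(x 0, …, x (p−1))| ≤ M · ∏ᵢ ‖x i‖ for all tuples x : Fin p → E, and let C be a real number with C² > ϑ⁻¹ · (n choose p) · M. Define a new inner product on E by ⟨x, y⟩' := ⟨P x, P y⟩ + C² ⟨Q x, Q y⟩, where P and Q are the orthogonal projections of E onto V and onto W respectively, and write ‖z‖' := √⟨z, z⟩'. Then for every tuple x : Fin p → E one has |φ(x 0, …, x (p−1))| ≤ ϑ ·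 ∏ᵢ ‖x i‖'; moreover ‖u i‖' = 1 for each i and φ(u 0, …, u (p−1)) = ϑ, so the comass of φ with respect to ⟨·,·⟩' equals ϑ. -/
open RealInnerProductSpace

/-- Hadamard-type bound for an alternating form of top degree. -/
lemma aux_hadamard {F : Type*} [NormedAddCommGroup F] [InnerProductSpace ℝ F]
    [FiniteDimensional ℝ F] {p : ℕ} (h : Module.finrank ℝ F = Fintype.card (Fin p))
    (ψ : AlternatingMap ℝ F ℝ (Fin p)) (b : OrthonormalBasis (Fin p) ℝ F)
    (v : Fin p → F) : |ψ v| ≤ |ψ ⇑b| * ∏ i, ‖v i‖ := by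
  classical
  letI : WellFoundedLT (Fin p) := inferInstance
  set c : OrthonormalBasis (Fin p) ℝ F := InnerProductSpace.gramSchmidtOrthonormalBasis (𝕜 := ℝ) (ι := Fin p) h v with hc
  have hdet : c.toBasis.det v = ∏ i, ⟪c i, v i⟫ := InnerProductSpace.gramSchmidtOrthonormalBasis_det h v
  have h1 : ψ v = ψ ⇑c * c.toBasis.det v := by
    conv_lhs => rw [ψ.eq_smul_basis_det c.toBasis]
    simp [smul_eq_mul]
  have h2 : ψ ⇑c = ψ ⇑b * b.toBasis.det ⇑c := by
    conv_lhs => rw [ψ.eq_smul_basis_det b.toBasis]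
    simp [smul_eq_mul]
  have h3 : |b.toBasis.det ⇑c| = 1 := by
    have := b.det_to_matrix_orthonormalBasis (b := c)
    rwa [Real.norm_eq_abs] at this
  have h4 : |c.toBasis.det v| ≤ ∏ i, ‖v i‖ := by
    rw [hdet, Finset.abs_prod]
    apply Finset.prod_le_prod (fun i _ => abs_nonneg _)
    intro i _
    calc |⟪c i, v i⟫| ≤ ‖c i‖ * ‖v i‖ := abs_real_inner_le_norm _ _
      _ = ‖v i‖ := by rw [c.orthonormal.1 i, one_mul]
  calc |ψ v| = |ψ ⇑c| * |c.toBasis.det v| := by rw [h1, abs_mul]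
    _ = |ψ ⇑b| * |c.toBasis.det v| := by rw [h2, abs_mul, h3, mul_one]
    _ ≤ |ψ ⇑b| * ∏ i, ‖v i‖ := by
        apply mul_le_mul_of_nonneg_left h4 (abs_nonneg _)

lemma aux_one_w {E : Type*} [NormedAddCommGroup E] [InnerProductSpace ℝ E]
    {p : ℕ} (hp1 : 1 ≤ p) (V W : Submodule ℝ E) (φ : AlternatingMap ℝ E ℝ (Fin p))
    (hW : ∀ w ∈ W, ∀ x : Fin p → E, (∀ i : Fin p, (i : ℕ) < p - 1 → x i ∈ V) →
        φ (fun i => if (i : ℕ) < p - 1 then x i else w) = 0)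
    (v : Fin p → E) (hv : ∀ i, v i ∈ V) (j : Fin p) (w : E) (hw : w ∈ W) :
    φ (Function.update v j w) = 0 := by
  classical
  set last : Fin p := ⟨p - 1, by omega⟩ with hlast
  set σ : Equiv.Perm (Fin p) := Equiv.swap j last with hσ
  set y : Fin p → E := Function.update v j w with hy
  set z : Fin p → E := y ∘ σ with hzdef
  have hne : ∀ i : Fin p, i ≠ last → (i : ℕ) < p - 1 := by
    intro i hi
    have : (i : ℕ) < p := i.2
    have : (i : ℕ) ≠ p - 1 := fun h => hi (Fin.ext h)
    omega
  have hlt : ∀ i : Fin p, (i : ℕ) < p - 1 → i ≠ last := by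
    intro i hi h
    rw [h] at hi
    exact absurd hi (by simp [hlast])
  have hσlast : σ last = j := Equiv.swap_apply_right j last
  have hzlast : z last = w := by
    show y (σ last) = w
    rw [hσlast, hy]
    simp
  have hzV : ∀ i : Fin p, i ≠ last → z i ∈ V := by
    intro i hi
    have hσi : σ i ≠ j := by
      intro h
      have h2 := congrArg σ h
      rw [hσ, Equiv.swap_apply_self, Equiv.swap_apply_left] at h2
      exact hi h2
    simp only [hzdef, Function.comp_apply, hy]
    rw [Function.update_of_ne hσi]
    exact hv _
  have hzeq : (fun i : Fin p => if (i : ℕ) < p - 1 then z i else w) = z := by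
    funext i
    by_cases h : (i : ℕ) < p - 1
    · simp [h]
    · have : i = last := by
        by_contra hc
        exact h (hne i hc)
      simp [h, this, hzlast]
  have hz0 : φ z = 0 := by
    rw [← hzeq]
    exact hW w hw z (fun i hi => hzV i (hlt i hi))
  have := φ.map_perm y σ
  rw [← hzdef] at this
  rw [hz0] at this
  rcases Int.units_eq_one_or (Equiv.Perm.sign σ) with h | h <;>
    · rw [h] at this; simpa using this.symm

lemma aux_count {p n : ℕ} (hpn : p ≤ n) :
    ((Finset.univ : Finset (Finset (Fin p))).filter
      (fun S => 2 ≤ Sᶜ.card ∧ Sᶜ.card ≤ n - p)).card ≤ n.choose p := by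
  classical
  set badSet := ((Finset.univ : Finset (Finset (Fin p))).filter
      (fun S => 2 ≤ Sᶜ.card ∧ Sᶜ.card ≤ n - p)) with hbs
  have h1 : badSet.card = (badSet.image compl).card :=
    (Finset.card_image_of_injective _ compl_injective).symm
  have h2 : badSet.image compl ⊆
      (Finset.Icc 2 (n - p)).biUnion (fun k => Finset.powersetCard k Finset.univ) := by
    intro T hT
    rw [Finset.mem_image] at hT
    obtain ⟨S, hS, rfl⟩ := hT
    rw [hbs, Finset.mem_filter] at hS
    rw [Finset.mem_biUnion]
    exact ⟨Sᶜ.card, Finset.mem_Icc.mpr ⟨hS.2.1, hS.2.2⟩,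
      Finset.mem_powersetCard.mpr ⟨Finset.subset_univ _, rfl⟩⟩
  have h3 : ((Finset.Icc 2 (n - p)).biUnion
      (fun k => Finset.powersetCard k (Finset.univ : Finset (Fin p)))).card ≤
      ∑ k ∈ Finset.Icc 2 (n - p), p.choose k := by
    refine (Finset.card_biUnion_le).trans ?_
    apply Finset.sum_le_sum
    intro k _
    rw [Finset.card_powersetCard, Finset.card_univ, Fintype.card_fin]
  have h4 : ∑ k ∈ Finset.Icc 2 (n - p), p.choose k ≤ n.choose p := by
    have hv : n.choose p =
        ∑ ij ∈ Finset.HasAntidiagonal.antidiagonal p, p.choose ij.1 * (n - p).choose ij.2 := by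
      have := Nat.add_choose_eq p (n - p) p
      rwa [Nat.add_sub_cancel' hpn] at this
    set A := (Finset.Icc 2 (n - p)).filter (· ≤ p) with hA
    have e1 : ∑ k ∈ A, p.choose k = ∑ k ∈ Finset.Icc 2 (n - p), p.choose k := by
      apply Finset.sum_subset (Finset.filter_subset _ _)
      intro k hk hnk
      simp only [hA, Finset.mem_filter] at hnk
      have : ¬ k ≤ p := fun h => hnk ⟨hk, h⟩
      exact Nat.choose_eq_zero_of_lt (by omega)
    rw [← e1]
    have e2 : ∀ k ∈ A, p.choose k ≤ p.choose (p - k) * (n - p).choose k := by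
      intro k hk
      simp only [hA, Finset.mem_filter, Finset.mem_Icc] at hk
      rw [Nat.choose_symm hk.2]
      exact Nat.le_mul_of_pos_right _ (Nat.choose_pos hk.1.2)
    refine (Finset.sum_le_sum e2).trans ?_
    have e3 : ∑ k ∈ A, p.choose (p - k) * (n - p).choose k =
        ∑ ij ∈ A.image (fun k => ((p - k, k) : ℕ × ℕ)),
          p.choose ij.1 * (n - p).choose ij.2 := by
      rw [Finset.sum_image]
      intro a _ b _ hab
      exact congrArg Prod.snd hab
    rw [e3, hv]
    apply Finset.sum_le_sum_of_subset
    intro ij hij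
    rw [Finset.mem_image] at hij
    obtain ⟨k, hk, rfl⟩ := hij
    simp only [hA, Finset.mem_filter, Finset.mem_Icc] at hk
    rw [Finset.HasAntidiagonal.mem_antidiagonal]
    omega
  have h2' := Finset.card_le_card h2
  omega

lemma aux_prod_le_two {p : ℕ} (r : Fin p → ℝ) (h0 : ∀ i, 0 ≤ r i) (h1 : ∀ i, r i ≤ 1)
    (j k : Fin p) (hjk : j ≠ k) : ∏ i, r i ≤ r j * r k := by
  classical
  have hk : k ∈ Finset.univ.erase j := Finset.mem_erase.mpr ⟨(Ne.symm hjk), Finset.mem_univ _⟩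
  have e1 : ∏ i, r i = r j * ∏ i ∈ Finset.univ.erase j, r i :=
    (Finset.mul_prod_erase Finset.univ r (Finset.mem_univ j)).symm
  have e2 : ∏ i ∈ Finset.univ.erase j, r i
      = r k * ∏ i ∈ (Finset.univ.erase j).erase k, r i :=
    (Finset.mul_prod_erase _ r hk).symm
  have e3 : ∏ i ∈ (Finset.univ.erase j).erase k, r i ≤ 1 :=
    Finset.prod_le_one (fun i _ => h0 i) (fun i _ => h1 i)
  have e4 : (0:ℝ) ≤ ∏ i ∈ (Finset.univ.erase j).erase k, r i :=
    Finset.prod_nonneg (fun i _ => h0 i)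
  rw [e1, e2]
  calc r j * (r k * ∏ i ∈ (Finset.univ.erase j).erase k, r i)
      ≤ r j * (r k * 1) := by
        apply mul_le_mul_of_nonneg_left _ (h0 j)
        exact mul_le_mul_of_nonneg_left e3 (h0 k)
    _ = r j * r k := by ring

set_option maxHeartbeats 1000000 in
open RealInnerProductSpace in
/-- Remark 3.5: the rescaled variant of the Harvey–Lawson lemma for a form with
`φ u = ϑ > 0`.  Taking `C² > ϑ⁻¹ · (n choose p) · M` and rescaling the metric by
`C²` on the complement `W` makes the comass of `φ` with respect to the new
inner product equal to `ϑ`, while the orthonormal frame `u` stays of norm `1`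
and `φ` still takes the value `ϑ` on it. -/
theorem stmt_4 (E : Type*) [NormedAddCommGroup E] [InnerProductSpace ℝ E]
    [FiniteDimensional ℝ E]
    (n p : ℕ) (hn : Module.finrank ℝ E = n) (hp1 : 1 ≤ p) (hpn : p ≤ n)
    (u : Fin p → E) (hu : Orthonormal ℝ u)
    (V : Submodule ℝ E) (hV : V = Submodule.span ℝ (Set.range u))
    (ϑ : ℝ) (hϑ : 0 < ϑ)
    (φ : AlternatingMap ℝ E ℝ (Fin p)) (hφ : φ u = ϑ)
    (W : Submodule ℝ E) (hVW : IsCompl V W)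
    (hperp : ∀ v ∈ V, ∀ w ∈ W, ⟪v, w⟫ = 0)
    (hW : ∀ w ∈ W, ∀ x : Fin p → E, (∀ i : Fin p, (i : ℕ) < p - 1 → x i ∈ V) →
        φ (fun i => if (i : ℕ) < p - 1 then x i else w) = 0)
    (M : ℝ) (hM : 0 ≤ M)
    (hbound : ∀ x : Fin p → E, |φ x| ≤ M * ∏ i, ‖x i‖)
    (C : ℝ) (hC : C ^ 2 > ϑ⁻¹ * ((n.choose p : ℝ) * M))
    (P Q : E → E)
    (hP : ∀ x : E, P x = (V.orthogonalProjectionOnto x : E))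
    (hQ : ∀ x : E, Q x = (W.orthogonalProjectionOnto x : E))
    (inner' : E → E → ℝ)
    (hinner' : ∀ x y : E, inner' x y = ⟪P x, P y⟫ + C ^ 2 * ⟪Q x, Q y⟫)
    (norm' : E → ℝ) (hnorm' : ∀ z : E, norm' z = Real.sqrt (inner' z z)) :
    (∀ x : Fin p → E, |φ x| ≤ ϑ * ∏ i, norm' (x i)) ∧
      (∀ i : Fin p, norm' (u i) = 1) ∧ φ u = ϑ := by
  classical
  -- scalar facts
  have hϑM : ϑ ≤ M := by
    have hb := hbound u
    have hprod : ∏ i, ‖u i‖ = 1 := Finset.prod_eq_one (fun i _ => hu.1 i)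
    rw [hφ, hprod, mul_one, abs_of_pos hϑ] at hb
    exact hb
  have hbinom1 : (1 : ℝ) ≤ (n.choose p : ℝ) := by
    exact_mod_cast Nat.one_le_iff_ne_zero.mpr (Nat.choose_pos hpn).ne'
  have hC2gt1 : 1 < C ^ 2 := by
    have h1 : (1:ℝ) ≤ ϑ⁻¹ * ((n.choose p : ℝ) * M) := by
      rw [← inv_mul_cancel₀ hϑ.ne']
      apply mul_le_mul_of_nonneg_left _ (inv_nonneg.mpr hϑ.le)
      nlinarith
    linarith
  have hC2pos : (0:ℝ) < C ^ 2 := lt_trans one_pos hC2gt1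
  have hCabs : 1 < |C| := by
    nlinarith [abs_nonneg C, sq_abs C]
  have hkey : (n.choose p : ℝ) * M < ϑ * C ^ 2 := by
    have := mul_lt_mul_of_pos_left hC hϑ
    rwa [← mul_assoc, mul_inv_cancel₀ hϑ.ne', one_mul] at this
  -- V, W facts
  have hfinV : Module.finrank ℝ V = p := by
    rw [hV, finrank_span_eq_card hu.linearIndependent, Fintype.card_fin]
  have hfinW : Module.finrank ℝ W = n - p := by
    have h1 := Submodule.finrank_add_eq_of_isCompl hVW
    rw [hfinV, hn] at h1
    omega
  have hWperp : W = Vᗮ := by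
    have hle : W ≤ Vᗮ := fun w hw =>
      (Submodule.mem_orthogonal V w).mpr (fun v hv => hperp v hv w hw)
    apply Submodule.eq_of_le_of_finrank_eq hle
    have h2 := Submodule.finrank_add_finrank_orthogonal V
    rw [hfinV, hn] at h2
    omega
  have hPQ : ∀ z : E, P z + Q z = z := by
    intro z
    rw [hP, hQ, hWperp]
    exact V.starProjection_add_starProjection_orthogonal z
  have hPmem : ∀ z, P z ∈ V := fun z => by rw [hP]; exact (V.orthogonalProjectionOnto z).2
  have hQmem : ∀ z, Q z ∈ W := fun z => by rw [hQ]; exact (W.orthogonalProjectionOnto z).2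
  have hinner_eq : ∀ z, inner' z z = ‖P z‖^2 + C^2 * ‖Q z‖^2 := by
    intro z
    rw [hinner', real_inner_self_eq_norm_sq, real_inner_self_eq_norm_sq]
  have hnn : ∀ z, 0 ≤ inner' z z := by
    intro z; rw [hinner_eq]; positivity
  have hnormsq : ∀ z, (norm' z)^2 = ‖P z‖^2 + C^2 * ‖Q z‖^2 := by
    intro z; rw [hnorm', Real.sq_sqrt (hnn z), hinner_eq]
  have hnorm'0 : ∀ z, 0 ≤ norm' z := fun z => by rw [hnorm']; exact Real.sqrt_nonneg _
  have hPle : ∀ z, ‖P z‖ ≤ norm' z := by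
    intro z
    nlinarith [hnormsq z, hnorm'0 z, norm_nonneg (P z), norm_nonneg (Q z), hC2pos,
      mul_nonneg hC2pos.le (sq_nonneg ‖Q z‖)]
  have hQle : ∀ z, |C| * ‖Q z‖ ≤ norm' z := by
    intro z
    nlinarith [hnormsq z, hnorm'0 z, norm_nonneg (P z), norm_nonneg (Q z),
      abs_nonneg C, sq_abs C, sq_nonneg ‖P z‖]
  have hdef : ∀ z, norm' z = 0 → z = 0 := by
    intro z hz
    have h1 := hnormsq z
    rw [hz] at h1
    have h2 : ‖P z‖ = 0 := by
      have ha : ‖P z‖ ^ 2 = 0 := by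
        nlinarith [mul_nonneg hC2pos.le (sq_nonneg ‖Q z‖), sq_nonneg ‖P z‖]
      exact pow_eq_zero_iff two_ne_zero |>.mp ha
    have h3 : ‖Q z‖ = 0 := by
      have hb : C ^ 2 * ‖Q z‖ ^ 2 = 0 := by nlinarith [sq_nonneg ‖P z‖]
      rcases mul_eq_zero.mp hb with h | h
      · exact absurd h hC2pos.ne'
      · exact pow_eq_zero_iff two_ne_zero |>.mp h
    have := hPQ z
    rw [norm_eq_zero.mp h2, norm_eq_zero.mp h3, add_zero] at this
    exact this.symm
  -- the orthonormal basis of V coming from u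
  have humem : ∀ i, u i ∈ V := fun i => by
    rw [hV]; exact Submodule.subset_span ⟨i, rfl⟩
  set uV : Fin p → V := fun i => ⟨u i, humem i⟩ with huV_def
  have huV : Orthonormal ℝ uV := by
    rw [orthonormal_iff_ite] at hu ⊢
    intro i j
    simpa [Submodule.coe_inner] using hu i j
  have hspan : ⊤ ≤ Submodule.span ℝ (Set.range uV) := by
    intro y _
    have hmap : Submodule.map V.subtype (Submodule.span ℝ (Set.range uV)) = V := by
      rw [Submodule.map_span]
      have : V.subtype '' Set.range uV = Set.range u := by
        ext z; simp [huV_def]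
      rw [this, ← hV]
    have hy : (y : E) ∈ Submodule.map V.subtype (Submodule.span ℝ (Set.range uV)) := by
      rw [hmap]; exact y.2
    obtain ⟨z, hz, hzy⟩ := hy
    have : z = y := Subtype.coe_injective hzy
    exact this ▸ hz
  set bV : OrthonormalBasis (Fin p) ℝ V := OrthonormalBasis.mk huV hspan with hbV_def
  set ψ : AlternatingMap ℝ V ℝ (Fin p) := φ.compLinearMap V.subtype with hψ_def
  have hψb : ψ ⇑bV = ϑ := by
    have : ⇑bV = uV := OrthonormalBasis.coe_mk huV hspan
    rw [this]
    show φ (fun i => (uV i : E)) = ϑ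
    simpa [huV_def] using hφ
  have hfr : Module.finrank ℝ V = Fintype.card (Fin p) := by
    rw [hfinV, Fintype.card_fin]
  -- the key Hadamard consequence: the bound on tuples from V
  have hVbound : ∀ v : Fin p → E, (∀ i, v i ∈ V) → |φ v| ≤ ϑ * ∏ i, ‖v i‖ := by
    intro v hv
    set vv : Fin p → V := fun i => ⟨v i, hv i⟩ with hvv
    have h1 := aux_hadamard hfr ψ bV vv
    have h2 : ψ vv = φ v := by
      show φ (fun i => ((vv i : E))) = φ v
      congr 1
    have h3 : ∀ i, ‖vv i‖ = ‖v i‖ := fun i => rfl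
    rw [h2, hψb, abs_of_pos hϑ] at h1
    calc |φ v| ≤ ϑ * ∏ i, ‖vv i‖ := h1
      _ = ϑ * ∏ i, ‖v i‖ := by simp only [h3]
  refine ⟨?_, ?_, hφ⟩
  · -- main comass bound
    intro x
    by_cases hdeg : ∃ i, x i = 0
    · obtain ⟨i, hi⟩ := hdeg
      have : φ x = 0 := φ.map_coord_zero i hi
      rw [this, abs_zero]
      exact mul_nonneg hϑ.le (Finset.prod_nonneg (fun i _ => hnorm'0 _))
    push_neg at hdeg
    set N : Fin p → ℝ := fun i => norm' (x i) with hN_def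
    have hNpos : ∀ i, 0 < N i := by
      intro i
      rcases lt_or_eq_of_le (hnorm'0 (x i)) with h | h
      · exact h
      · exact absurd (hdef _ h.symm) (hdeg i)
    set v : Fin p → E := fun i => P (x i) with hv_def
    set w : Fin p → E := fun i => Q (x i) with hw_def
    set t : Fin p → ℝ := fun i => ‖v i‖ / N i with ht_def
    set s : Fin p → ℝ := fun i => |C| * ‖w i‖ / N i with hs_def
    have ht0 : ∀ i, 0 ≤ t i := fun i => div_nonneg (norm_nonneg _) (hNpos i).le
    have ht1 : ∀ i, t i ≤ 1 := fun i => (div_le_one (hNpos i)).mpr (hPle (x i))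
    have hs0 : ∀ i, 0 ≤ s i :=
      fun i => div_nonneg (mul_nonneg (abs_nonneg _) (norm_nonneg _)) (hNpos i).le
    have hs1 : ∀ i, s i ≤ 1 := fun i => (div_le_one (hNpos i)).mpr (hQle (x i))
    have hts : ∀ i, t i ^ 2 + s i ^ 2 = 1 := by
      intro i
      have h2 : ‖v i‖^2 + C^2 * ‖w i‖^2 = N i ^ 2 := (hnormsq (x i)).symm
      have h3 : N i ≠ 0 := (hNpos i).ne'
      have e1 : t i ^ 2 = ‖v i‖^2 / N i ^ 2 := by
        simp only [ht_def]
        rw [div_pow]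
      have e2 : s i ^ 2 = C^2 * ‖w i‖^2 / N i ^ 2 := by
        simp only [hs_def]
        rw [div_pow, mul_pow, sq_abs]
      rw [e1, e2, ← add_div, h2, div_self (pow_ne_zero _ h3)]
    have hveq : ∀ i, ‖v i‖ = t i * N i := by
      intro i
      simp only [ht_def]
      rw [div_mul_cancel₀ _ (hNpos i).ne']
    have hweq : ∀ i, ‖w i‖ = s i * N i * |C|⁻¹ := by
      intro i
      simp only [hs_def]
      have hC0 : |C| ≠ 0 := by
        intro h
        rw [h] at hCabs
        norm_num at hCabs
      rw [div_mul_cancel₀ _ (hNpos i).ne', mul_comm |C| ‖w i‖, mul_assoc,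
        mul_inv_cancel₀ hC0, mul_one]
    set τ : ℝ := ∏ i, t i with hτ_def
    have hτ0 : 0 ≤ τ := Finset.prod_nonneg (fun i _ => ht0 i)
    have hτ1 : τ ≤ 1 := Finset.prod_le_one (fun i _ => ht0 i) (fun i _ => ht1 i)
    set Pi : ℝ := ∏ i, N i with hPi_def
    have hPi0 : 0 ≤ Pi := Finset.prod_nonneg (fun i _ => (hNpos i).le)
    -- expansion
    have hsum : φ x = ∑ S : Finset (Fin p), φ (S.piecewise v w) := by
      have hx : x = v + w := by
        funext i
        exact (hPQ (x i)).symm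
      rw [hx]
      exact φ.toMultilinearMap.map_add_univ v w
    -- the univ term
    have huniv : |φ (Finset.univ.piecewise v w)| ≤ ϑ * (τ * Pi) := by
      rw [Finset.piecewise_univ]
      have h1 := hVbound v (fun i => hPmem _)
      have h2 : ∏ i, ‖v i‖ = τ * Pi := by
        rw [hτ_def, hPi_def, ← Finset.prod_mul_distrib]
        exact Finset.prod_congr rfl (fun i _ => hveq i)
      rw [h2] at h1
      exact h1
    -- the other terms
    have hterm : ∀ S : Finset (Fin p), S ≠ Finset.univ →
        |φ (S.piecewise v w)| ≤ if 2 ≤ Sᶜ.card ∧ Sᶜ.card ≤ n - p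
          then M * (C ^ 2)⁻¹ * ((1 - τ) * Pi) else 0 := by
      intro S hS
      have hc1 : 1 ≤ Sᶜ.card := by
        rw [Nat.one_le_iff_ne_zero]
        intro h0
        rw [Finset.card_eq_zero, Finset.compl_eq_empty_iff] at h0
        exact hS h0
      by_cases h1 : Sᶜ.card = 1
      · rw [if_neg (by omega)]
        obtain ⟨j, hj⟩ := Finset.card_eq_one.mp h1
        have hjS : j ∉ S := by
          rw [← Finset.mem_compl, hj]
          exact Finset.mem_singleton_self j
        have hpc : S.piecewise v w = Function.update v j (w j) := by
          funext i
          rw [Function.update_apply]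
          by_cases hij : i = j
          · subst hij
            rw [if_pos rfl, Finset.piecewise_eq_of_notMem _ _ _ hjS]
          · rw [if_neg hij]
            apply Finset.piecewise_eq_of_mem
            by_contra hiS
            have hic : i ∈ Sᶜ := Finset.mem_compl.mpr hiS
            rw [hj, Finset.mem_singleton] at hic
            exact hij hic
        rw [hpc, aux_one_w hp1 V W φ hW v (fun i => hPmem _) j (w j) (hQmem _), abs_zero]
      by_cases h2 : Sᶜ.card ≤ n - p
      · -- the main estimate
        have h2' : 2 ≤ Sᶜ.card := by omega
        rw [if_pos ⟨h2', h2⟩]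
        obtain ⟨j, hjmem, k, hkmem, hjk⟩ := Finset.one_lt_card.mp (by omega : 1 < Sᶜ.card)
        have hprodpc : ∏ i, ‖S.piecewise v w i‖ = (∏ i ∈ S, ‖v i‖) * ∏ i ∈ Sᶜ, ‖w i‖ := by
          rw [← Finset.prod_mul_prod_compl S (fun i => ‖S.piecewise v w i‖)]
          congr 1
          · exact Finset.prod_congr rfl
              (fun i hi => by rw [Finset.piecewise_eq_of_mem _ _ _ hi])
          · exact Finset.prod_congr rfl
              (fun i hi => by rw [Finset.piecewise_eq_of_notMem _ _ _ (Finset.mem_compl.mp hi)])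
        have hprodv : ∏ i ∈ S, ‖v i‖ = (∏ i ∈ S, t i) * ∏ i ∈ S, N i := by
          rw [← Finset.prod_mul_distrib]
          exact Finset.prod_congr rfl (fun i _ => hveq i)
        have hprodw : ∏ i ∈ Sᶜ, ‖w i‖ =
            ((∏ i ∈ Sᶜ, s i) * ∏ i ∈ Sᶜ, N i) * |C|⁻¹ ^ Sᶜ.card := by
          rw [← Finset.prod_const, ← Finset.prod_mul_distrib, ← Finset.prod_mul_distrib]
          exact Finset.prod_congr rfl (fun i _ => hweq i)
        set r : Fin p → ℝ := S.piecewise t s with hr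
        have hr0 : ∀ i, 0 ≤ r i := by
          intro i
          rw [hr]
          by_cases hi : i ∈ S
          · rw [Finset.piecewise_eq_of_mem _ _ _ hi]; exact ht0 i
          · rw [Finset.piecewise_eq_of_notMem _ _ _ hi]; exact hs0 i
        have hr1 : ∀ i, r i ≤ 1 := by
          intro i
          rw [hr]
          by_cases hi : i ∈ S
          · rw [Finset.piecewise_eq_of_mem _ _ _ hi]; exact ht1 i
          · rw [Finset.piecewise_eq_of_notMem _ _ _ hi]; exact hs1 i
        have hX : (∏ i ∈ S, t i) * ∏ i ∈ Sᶜ, s i = ∏ i, r i := by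
          rw [← Finset.prod_mul_prod_compl S r]
          congr 1
          · exact Finset.prod_congr rfl
              (fun i hi => by rw [hr, Finset.piecewise_eq_of_mem _ _ _ hi])
          · exact Finset.prod_congr rfl
              (fun i hi => by rw [hr, Finset.piecewise_eq_of_notMem _ _ _ (Finset.mem_compl.mp hi)])
        have hrj : r j = s j := by
          rw [hr]; exact Finset.piecewise_eq_of_notMem _ _ _ (Finset.mem_compl.mp hjmem)
        have hrk : r k = s k := by
          rw [hr]; exact Finset.piecewise_eq_of_notMem _ _ _ (Finset.mem_compl.mp hkmem)
        have hsjk : s j * s k ≤ 1 - t j * t k := by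
          nlinarith [hts j, hts k, sq_nonneg (t j - t k), sq_nonneg (s j - s k),
            ht0 j, ht0 k, hs0 j, hs0 k]
        have hτjk : τ ≤ t j * t k := aux_prod_le_two t ht0 ht1 j k hjk
        have hXle : (∏ i ∈ S, t i) * ∏ i ∈ Sᶜ, s i ≤ 1 - τ := by
          rw [hX]
          calc ∏ i, r i ≤ r j * r k := aux_prod_le_two r hr0 hr1 j k hjk
            _ = s j * s k := by rw [hrj, hrk]
            _ ≤ 1 - t j * t k := hsjk
            _ ≤ 1 - τ := by linarith
        have hX0 : 0 ≤ (∏ i ∈ S, t i) * ∏ i ∈ Sᶜ, s i :=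
          mul_nonneg (Finset.prod_nonneg (fun i _ => ht0 i))
            (Finset.prod_nonneg (fun i _ => hs0 i))
        have hcpow : |C|⁻¹ ^ Sᶜ.card ≤ (C ^ 2)⁻¹ := by
          have h3 : |C|⁻¹ ^ Sᶜ.card ≤ |C|⁻¹ ^ 2 :=
            pow_le_pow_of_le_one (by positivity) (inv_le_one_of_one_le₀ hCabs.le) h2'
          rw [← sq_abs C, ← inv_pow]
          exact h3
        have hcpow0 : (0:ℝ) ≤ |C|⁻¹ ^ Sᶜ.card := by positivity
        have hNsplit : (∏ i ∈ S, N i) * ∏ i ∈ Sᶜ, N i = Pi :=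
          Finset.prod_mul_prod_compl S N
        calc |φ (S.piecewise v w)| ≤ M * ∏ i, ‖S.piecewise v w i‖ := hbound _
          _ = M * ((((∏ i ∈ S, t i) * ∏ i ∈ Sᶜ, s i) * Pi) * |C|⁻¹ ^ Sᶜ.card) := by
              rw [hprodpc, hprodv, hprodw, ← hNsplit]
              ring
          _ ≤ M * (((1 - τ) * Pi) * (C ^ 2)⁻¹) := by
              apply mul_le_mul_of_nonneg_left _ hM
              have e1 : (((∏ i ∈ S, t i) * ∏ i ∈ Sᶜ, s i) * Pi) * |C|⁻¹ ^ Sᶜ.card ≤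
                  ((1 - τ) * Pi) * |C|⁻¹ ^ Sᶜ.card :=
                mul_le_mul_of_nonneg_right (mul_le_mul_of_nonneg_right hXle hPi0) hcpow0
              have e2 : ((1 - τ) * Pi) * |C|⁻¹ ^ Sᶜ.card ≤ ((1 - τ) * Pi) * (C ^ 2)⁻¹ :=
                mul_le_mul_of_nonneg_left hcpow (mul_nonneg (by linarith) hPi0)
              linarith
          _ = M * (C ^ 2)⁻¹ * ((1 - τ) * Pi) := by ring
      · -- too many W-vectors: linearly dependent, so the term vanishes
        rw [if_neg (fun h => h2 h.2)]
        have hdep : ¬ LinearIndependent ℝ (S.piecewise v w) := by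
          intro hli
          have hli2 := hli.comp (fun i : {i // i ∈ Sᶜ} => (i : Fin p)) Subtype.coe_injective
          set g : {i // i ∈ Sᶜ} → W := fun i => ⟨w i, hQmem _⟩ with hg
          have hcomp : (S.piecewise v w) ∘ (fun i : {i // i ∈ Sᶜ} => (i : Fin p)) =
              W.subtype ∘ g := by
            funext i
            have hiS : (i : Fin p) ∉ S := Finset.mem_compl.mp i.2
            simp [Finset.piecewise_eq_of_notMem _ _ _ hiS, hg]
          rw [hcomp] at hli2
          have hliW : LinearIndependent ℝ g := LinearIndependent.of_comp W.subtype hli2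
          have hcard := hliW.fintype_card_le_finrank
          rw [hfinW, Fintype.card_coe] at hcard
          omega
        rw [φ.map_linearDependent _ hdep, abs_zero]
    -- combination
    have habs : |φ x| ≤ ∑ S : Finset (Fin p), |φ (S.piecewise v w)| := by
      rw [hsum]
      exact Finset.abs_sum_le_sum_abs _ _
    have hsplit : ∑ S : Finset (Fin p), |φ (S.piecewise v w)| =
        |φ (Finset.univ.piecewise v w)| +
          ∑ S ∈ Finset.univ.erase Finset.univ, |φ (S.piecewise v w)| :=
      (Finset.add_sum_erase _ _ (Finset.mem_univ _)).symm
    have hc0 : 0 ≤ M * (C ^ 2)⁻¹ * ((1 - τ) * Pi) := by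
      apply mul_nonneg (mul_nonneg hM (inv_nonneg.mpr hC2pos.le))
      exact mul_nonneg (by linarith) hPi0
    have hrest : ∑ S ∈ Finset.univ.erase Finset.univ, |φ (S.piecewise v w)| ≤
        (n.choose p : ℝ) * (M * (C ^ 2)⁻¹ * ((1 - τ) * Pi)) := by
      have h1 : ∑ S ∈ Finset.univ.erase Finset.univ, |φ (S.piecewise v w)|
          ≤ ∑ S ∈ Finset.univ.erase Finset.univ,
            (if 2 ≤ Sᶜ.card ∧ Sᶜ.card ≤ n - p
              then M * (C ^ 2)⁻¹ * ((1 - τ) * Pi) else 0) :=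
        Finset.sum_le_sum (fun S hS => hterm S (Finset.ne_of_mem_erase hS))
      rw [← Finset.sum_filter, Finset.sum_const, nsmul_eq_mul] at h1
      refine h1.trans ?_
      apply mul_le_mul_of_nonneg_right _ hc0
      have hsub : (Finset.univ.erase Finset.univ).filter
          (fun S : Finset (Fin p) => 2 ≤ Sᶜ.card ∧ Sᶜ.card ≤ n - p) ⊆
          Finset.univ.filter
          (fun S : Finset (Fin p) => 2 ≤ Sᶜ.card ∧ Sᶜ.card ≤ n - p) :=
        Finset.filter_subset_filter _ (Finset.erase_subset _ _)
      have h2 := (Finset.card_le_card hsub).trans (aux_count hpn)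
      exact_mod_cast h2
    have hfinal : ϑ * (τ * Pi) + (n.choose p : ℝ) * (M * (C ^ 2)⁻¹ * ((1 - τ) * Pi))
        ≤ ϑ * Pi := by
      have key : (n.choose p : ℝ) * (M * (C ^ 2)⁻¹) ≤ ϑ := by
        rw [← mul_assoc]
        rw [mul_inv_le_iff₀ hC2pos]
        nlinarith
      have h2 : (n.choose p : ℝ) * (M * (C ^ 2)⁻¹) * ((1 - τ) * Pi) ≤ ϑ * ((1 - τ) * Pi) :=
        mul_le_mul_of_nonneg_right key (mul_nonneg (by linarith) hPi0)
      nlinarith [h2]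
    calc |φ x| ≤ ∑ S : Finset (Fin p), |φ (S.piecewise v w)| := habs
      _ = _ := hsplit
      _ ≤ ϑ * (τ * Pi) + (n.choose p : ℝ) * (M * (C ^ 2)⁻¹ * ((1 - τ) * Pi)) :=
          add_le_add huniv hrest
      _ ≤ ϑ * Pi := hfinal
      _ = ϑ * ∏ i, norm' (x i) := rfl
  · -- norm' (u i) = 1
    intro i
    have hPu : P (u i) = u i := by
      rw [hP]
      exact V.starProjection_eq_self_iff.mpr (humem i)
    have hQu : Q (u i) = 0 := by
      rw [hQ, hWperp]
      have hmem : u i ∈ Vᗮᗮ := Submodule.le_orthogonal_orthogonal V (humem i)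
      rw [Submodule.orthogonalProjectionOnto_apply_of_mem_orthogonal hmem]
      rfl
    rw [hnorm', hinner_eq, hPu, hQu, norm_zero]
    rw [hu.1 i]
    norm_num
end
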